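/- Let δ, p, q, α be real numbers with 0<δ<1, 2≤p<q and q<α+1, let X>0, Y≥0, A>0, λ>0, B>0 be reals, define σ(t)=X·t^{p−1−α}+Y·t^{q−1−α}−A·t^{−α−δ} and φ(t)=(X/p)·t^p+(Y/q)·t^q−(A/(1−δ))·t^{1−δ}−(λB/(α+1))·t^{α+1} for t>0, let t_max be the unique critical point of σ, and assume λ·B < σ(t_max). Then there exist exactly two points 0<t₁<t_max<t₂ such that σ(t₁)=λ·B=σ(t₂), and these satisfy σ′(t₁)>0>σ′(t₂). Consequently φ′(t₁)=φ′(t₂)=0, φ″(t₁)>0 and φ″(t₂)<0; in particular t₁ and t₂ are the only critical points of φ on (0,∞). -/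

import Mathlib

open Filter Set
open Topology

/-- when `B > 0` and `λ·B < σ(t_max)`, there are exactly two
points `0 < t₁ < t_max < t₂` with `σ(t₁) = λ·B = σ(t₂)`; they satisfy
`σ′(t₁) > 0 > σ′(t₂)`, hence `φ′(t₁) = φ′(t₂) = 0`, `φ″(t₁) > 0`,
`φ″(t₂) < 0`, and `t₁, t₂` are the only critical points of the fibering map
`φ(t) = (X/p)·t^p + (Y/q)·t^q − (A/(1−δ))·t^{1−δ} − (λB/(α+1))·t^{α+1}`
on `(0,∞)`. -/
theorem statement7
    (δ p q α X Y A lam B : ℝ)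
    (hδ0 : 0 < δ) (hδ1 : δ < 1)
    (hp : 2 ≤ p) (hpq : p < q) (hq : q < α + 1)
    (hX : 0 < X) (hY : 0 ≤ Y) (hA : 0 < A) (hlam : 0 < lam) (hB : 0 < B)
    (σ φ : ℝ → ℝ)
    (hσ : ∀ t : ℝ, σ t = X * t ^ (p - 1 - α) + Y * t ^ (q - 1 - α)
        - A * t ^ (-α - δ))
    (hφ : ∀ t : ℝ, φ t = (X / p) * t ^ p + (Y / q) * t ^ q
        - (A / (1 - δ)) * t ^ (1 - δ)
        - (lam * B / (α + 1)) * t ^ (α + 1))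
    (tmax : ℝ) (htmax : 0 < tmax)
    (heq : (α + 1 - p) * X * tmax ^ (p - 1 + δ)
        + (α + 1 - q) * Y * tmax ^ (q - 1 + δ) = (α + δ) * A)
    (hsmall : lam * B < σ tmax) :
    ∃ t₁ t₂ : ℝ, 0 < t₁ ∧ t₁ < tmax ∧ tmax < t₂ ∧
      σ t₁ = lam * B ∧ σ t₂ = lam * B ∧
      (∀ t : ℝ, 0 < t → σ t = lam * B → t = t₁ ∨ t = t₂) ∧
      0 < deriv σ t₁ ∧ deriv σ t₂ < 0 ∧
      deriv φ t₁ = 0 ∧ deriv φ t₂ = 0 ∧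
      0 < deriv (deriv φ) t₁ ∧ deriv (deriv φ) t₂ < 0 ∧
      (∀ t : ℝ, 0 < t → deriv φ t = 0 → t = t₁ ∨ t = t₂) := by
  have hσf : σ = fun t : ℝ => X * t ^ (p - 1 - α) + Y * t ^ (q - 1 - α)
      - A * t ^ (-α - δ) := funext hσ
  have hφf : φ = fun t : ℝ => (X / p) * t ^ p + (Y / q) * t ^ q
      - (A / (1 - δ)) * t ^ (1 - δ)
      - (lam * B / (α + 1)) * t ^ (α + 1) := funext hφ
  subst hσf hφf
  have hlB : 0 < lam * B := mul_pos hlam hB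
  -- auxiliary functions
  set g : ℝ → ℝ := fun t => (α + 1 - p) * X * t ^ (p - 1 + δ)
      + (α + 1 - q) * Y * t ^ (q - 1 + δ) with hg
  set σd : ℝ → ℝ := fun t => (p - 1 - α) * X * t ^ (p - 2 - α)
      + (q - 1 - α) * Y * t ^ (q - 2 - α) + (α + δ) * A * t ^ (-α - δ - 1) with hσd
  -- derivative of σ
  have hDσ : ∀ t : ℝ, 0 < t →
      HasDerivAt (fun t : ℝ => X * t ^ (p - 1 - α) + Y * t ^ (q - 1 - α)
        - A * t ^ (-α - δ)) (σd t) t := by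
    intro t ht
    have h1 := (Real.hasDerivAt_rpow_const (x := t) (p := p - 1 - α)
      (Or.inl ht.ne')).const_mul X
    have h2 := (Real.hasDerivAt_rpow_const (x := t) (p := q - 1 - α)
      (Or.inl ht.ne')).const_mul Y
    have h3 := (Real.hasDerivAt_rpow_const (x := t) (p := -α - δ)
      (Or.inl ht.ne')).const_mul A
    have h := (h1.add h2).sub h3
    convert h using 1
    · rfl
    · rfl
    · rfl
    have E1 : t ^ (p - 1 - α - 1) = t ^ (p - 2 - α) := by
      rw [show p - 1 - α - 1 = p - 2 - α by ring]
    have E2 : t ^ (q - 1 - α - 1) = t ^ (q - 2 - α) := by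
      rw [show q - 1 - α - 1 = q - 2 - α by ring]
    rw [hσd, E1, E2]
    ring
  -- σd in terms of g
  have hσd_eq : ∀ t : ℝ, 0 < t → σd t = t ^ (-α - δ - 1) * ((α + δ) * A - g t) := by
    intro t ht
    have E1 : t ^ (p - 2 - α) = t ^ (p - 1 + δ) * t ^ (-α - δ - 1) := by
      rw [← Real.rpow_add ht]; congr 1; ring
    have E2 : t ^ (q - 2 - α) = t ^ (q - 1 + δ) * t ^ (-α - δ - 1) := by
      rw [← Real.rpow_add ht]; congr 1; ring
    rw [hσd, hg]
    simp only
    rw [E1, E2]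
    ring
  have hgtmax : g tmax = (α + δ) * A := heq
  -- g strictly increasing on positives
  have hgmono : ∀ s t : ℝ, 0 < s → s < t → g s < g t := by
    intro s t hs hst
    have e1 : 0 < p - 1 + δ := by linarith
    have e2 : 0 < q - 1 + δ := by linarith
    have c1 : 0 < (α + 1 - p) * X := mul_pos (by linarith) hX
    have c2 : 0 ≤ (α + 1 - q) * Y := mul_nonneg (by linarith) hY
    have t1 : (α + 1 - p) * X * s ^ (p - 1 + δ) < (α + 1 - p) * X * t ^ (p - 1 + δ) :=
      (mul_lt_mul_iff_right₀ c1).2 (Real.rpow_lt_rpow hs.le hst e1)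
    have t2 : (α + 1 - q) * Y * s ^ (q - 1 + δ) ≤ (α + 1 - q) * Y * t ^ (q - 1 + δ) :=
      mul_le_mul_of_nonneg_left (Real.rpow_le_rpow hs.le hst.le e2.le) c2
    exact add_lt_add_of_lt_of_le t1 t2
  have hσd_pos : ∀ t : ℝ, 0 < t → t < tmax → 0 < σd t := by
    intro t ht htm
    rw [hσd_eq t ht]
    have : g t < (α + δ) * A := hgtmax ▸ hgmono t tmax ht htm
    exact mul_pos (Real.rpow_pos_of_pos ht _) (by linarith)
  have hσd_neg : ∀ t : ℝ, tmax < t → σd t < 0 := by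
    intro t htm
    have ht : 0 < t := htmax.trans htm
    rw [hσd_eq t ht]
    have : (α + δ) * A < g t := hgtmax ▸ hgmono tmax t htmax htm
    have h1 : 0 < t ^ (-α - δ - 1) := Real.rpow_pos_of_pos ht _
    nlinarith
  set σ₀ : ℝ → ℝ := fun t : ℝ => X * t ^ (p - 1 - α) + Y * t ^ (q - 1 - α)
      - A * t ^ (-α - δ) with hσ₀
  have hderivσ : ∀ t : ℝ, 0 < t → deriv σ₀ t = σd t := fun t ht => (hDσ t ht).deriv
  -- monotonicity
  have hmono : StrictMonoOn σ₀ (Ioc 0 tmax) := by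
    apply strictMonoOn_of_deriv_pos (convex_Ioc 0 tmax)
    · exact fun t ht => (hDσ t ht.1).continuousAt.continuousWithinAt
    · intro t ht
      rw [interior_Ioc] at ht
      rw [hderivσ t ht.1]
      exact hσd_pos t ht.1 ht.2
  have hanti : StrictAntiOn σ₀ (Ici tmax) := by
    apply strictAntiOn_of_deriv_neg (convex_Ici tmax)
    · exact fun t ht => (hDσ t (lt_of_lt_of_le htmax ht)).continuousAt.continuousWithinAt
    · intro t ht
      rw [interior_Ici] at ht
      rw [hderivσ t (htmax.trans ht)]
      exact hσd_neg t ht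
  -- σ₀ factorisation for small-t estimate
  have hσ_factor : ∀ t : ℝ, 0 < t →
      σ₀ t = t ^ (-α - δ) * (X * t ^ (p - 1 + δ) + Y * t ^ (q - 1 + δ) - A) := by
    intro t ht
    have E1 : t ^ (p - 1 - α) = t ^ (p - 1 + δ) * t ^ (-α - δ) := by
      rw [← Real.rpow_add ht]; congr 1; ring
    have E2 : t ^ (q - 1 - α) = t ^ (q - 1 + δ) * t ^ (-α - δ) := by
      rw [← Real.rpow_add ht]; congr 1; ring
    rw [hσ₀]
    simp only
    rw [E1, E2]
    ring
  -- existence of a small point with σ₀ < lam*B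
  have hsmallpt : ∃ s : ℝ, 0 < s ∧ s < tmax ∧ σ₀ s < lam * B := by
    have e1 : 0 < p - 1 + δ := by linarith
    have e2 : 0 < q - 1 + δ := by linarith
    have hc1 : Tendsto (fun t : ℝ => t ^ (p - 1 + δ)) (𝓝 0) (𝓝 0) := by
      have := (Real.continuousAt_rpow_const 0 (p - 1 + δ) (Or.inr e1.le))
      simpa [Real.zero_rpow e1.ne'] using this.tendsto
    have hc2 : Tendsto (fun t : ℝ => t ^ (q - 1 + δ)) (𝓝 0) (𝓝 0) := by
      have := (Real.continuousAt_rpow_const 0 (q - 1 + δ) (Or.inr e2.le))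
      simpa [Real.zero_rpow e2.ne'] using this.tendsto
    have hF : Tendsto (fun t : ℝ => X * t ^ (p - 1 + δ) + Y * t ^ (q - 1 + δ) - A)
        (𝓝[>] (0:ℝ)) (𝓝 (-A)) := by
      have := ((hc1.const_mul X).add (hc2.const_mul Y)).sub (tendsto_const_nhds (x := A))
      simpa using this.mono_left nhdsWithin_le_nhds
    have hev : ∀ᶠ t in 𝓝[>] (0:ℝ),
        X * t ^ (p - 1 + δ) + Y * t ^ (q - 1 + δ) - A < 0 :=
      hF.eventually_lt_const (by linarith)
    have hmem : ∀ᶠ t in 𝓝[>] (0:ℝ), t ∈ Ioo (0:ℝ) tmax :=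
      Filter.eventually_of_mem (Ioo_mem_nhdsGT htmax) fun t ht => ht
    obtain ⟨s, hs1, hs2⟩ := (hev.and hmem).exists
    refine ⟨s, hs2.1, hs2.2, ?_⟩
    have hspos : 0 < s := hs2.1
    have := mul_neg_of_pos_of_neg (Real.rpow_pos_of_pos hspos (-α - δ)) hs1
    rw [hσ_factor s hspos]
    linarith
  obtain ⟨s₁, hs₁0, hs₁m, hs₁v⟩ := hsmallpt
  -- existence of t₁
  have hcontIcc : ∀ a b : ℝ, 0 < a → ContinuousOn σ₀ (Icc a b) := by
    intro a b ha t ht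
    exact (hDσ t (lt_of_lt_of_le ha ht.1)).continuousAt.continuousWithinAt
  obtain ⟨t₁, ht₁mem, ht₁v⟩ :=
    intermediate_value_Ioo hs₁m.le (hcontIcc s₁ tmax hs₁0) ⟨hs₁v, hsmall⟩
  have ht₁0 : 0 < t₁ := hs₁0.trans ht₁mem.1
  have ht₁m : t₁ < tmax := ht₁mem.2
  -- σ₀ tends to 0 at +∞
  have hlim : Tendsto σ₀ atTop (𝓝 0) := by
    have h1 : Tendsto (fun t : ℝ => t ^ (p - 1 - α)) atTop (𝓝 0) := by
      have := tendsto_rpow_neg_atTop (y := α + 1 - p) (by linarith)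
      simpa only [show -(α + 1 - p) = p - 1 - α by ring] using this
    have h2 : Tendsto (fun t : ℝ => t ^ (q - 1 - α)) atTop (𝓝 0) := by
      have := tendsto_rpow_neg_atTop (y := α + 1 - q) (by linarith)
      simpa only [show -(α + 1 - q) = q - 1 - α by ring] using this
    have h3 : Tendsto (fun t : ℝ => t ^ (-α - δ)) atTop (𝓝 0) := by
      have := tendsto_rpow_neg_atTop (y := α + δ) (by linarith)
      simpa only [show -(α + δ) = -α - δ by ring] using this
    have := ((h1.const_mul X).add (h2.const_mul Y)).sub (h3.const_mul A)
    simpa using this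
  have hbigpt : ∃ s : ℝ, tmax < s ∧ σ₀ s < lam * B := by
    have h1 : ∀ᶠ t in atTop, σ₀ t < lam * B := hlim.eventually_lt_const hlB
    obtain ⟨s, hs1, hs2⟩ := (h1.and (eventually_gt_atTop tmax)).exists
    exact ⟨s, hs2, hs1⟩
  obtain ⟨s₂, hs₂m, hs₂v⟩ := hbigpt
  obtain ⟨t₂, ht₂mem, ht₂v⟩ :=
    intermediate_value_Ioo' hs₂m.le (hcontIcc tmax s₂ htmax) ⟨hs₂v, hsmall⟩
  have ht₂m : tmax < t₂ := ht₂mem.1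
  have ht₂0 : 0 < t₂ := htmax.trans ht₂m
  -- uniqueness of solutions of σ₀ t = lam*B
  have huniq : ∀ t : ℝ, 0 < t → σ₀ t = lam * B → t = t₁ ∨ t = t₂ := by
    intro t ht hv
    rcases lt_trichotomy t tmax with h | h | h
    · left
      exact hmono.injOn ⟨ht, h.le⟩ ⟨ht₁0, ht₁m.le⟩ (hv.trans ht₁v.symm)
    · exfalso; rw [h] at hv; rw [hv] at hsmall; exact lt_irrefl _ hsmall
    · right
      exact hanti.injOn (le_of_lt h) (le_of_lt ht₂m) (hv.trans ht₂v.symm)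
  -- derivative of φ
  set ψ : ℝ → ℝ := fun t => X * t ^ (p - 1) + Y * t ^ (q - 1) - A * t ^ (-δ)
      - lam * B * t ^ α with hψ
  have hp0 : p ≠ 0 := by linarith
  have hq0 : q ≠ 0 := by linarith
  have hd0 : (1:ℝ) - δ ≠ 0 := by linarith
  have ha0 : α + 1 ≠ 0 := by linarith
  have hDφ : ∀ t : ℝ, 0 < t →
      HasDerivAt (fun t : ℝ => (X / p) * t ^ p + (Y / q) * t ^ q
        - (A / (1 - δ)) * t ^ (1 - δ)
        - (lam * B / (α + 1)) * t ^ (α + 1)) (ψ t) t := by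
    intro t ht
    have h1 := (Real.hasDerivAt_rpow_const (x := t) (p := p)
      (Or.inl ht.ne')).const_mul (X / p)
    have h2 := (Real.hasDerivAt_rpow_const (x := t) (p := q)
      (Or.inl ht.ne')).const_mul (Y / q)
    have h3 := (Real.hasDerivAt_rpow_const (x := t) (p := 1 - δ)
      (Or.inl ht.ne')).const_mul (A / (1 - δ))
    have h4 := (Real.hasDerivAt_rpow_const (x := t) (p := α + 1)
      (Or.inl ht.ne')).const_mul (lam * B / (α + 1))
    have h := ((h1.add h2).sub h3).sub h4
    convert h using 1
    · rfl
    · rfl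
    · rfl
    rw [hψ]
    rw [show (1:ℝ) - δ - 1 = -δ by ring, show α + 1 - 1 = α by ring]
    field_simp
  -- ψ = t^α (σ₀ - lam B)
  have hψσ : ∀ t : ℝ, 0 < t → ψ t = t ^ α * (σ₀ t - lam * B) := by
    intro t ht
    have e1 : t ^ (p - 1) = t ^ α * t ^ (p - 1 - α) := by
      rw [← Real.rpow_add ht]; congr 1; ring
    have e2 : t ^ (q - 1) = t ^ α * t ^ (q - 1 - α) := by
      rw [← Real.rpow_add ht]; congr 1; ring
    have e3 : t ^ (-δ) = t ^ α * t ^ (-α - δ) := by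
      rw [← Real.rpow_add ht]; congr 1; ring
    rw [hψ, hσ₀]
    simp only
    rw [e1, e2, e3]
    ring
  have hderivφ : ∀ t : ℝ, 0 < t →
      deriv (fun t : ℝ => (X / p) * t ^ p + (Y / q) * t ^ q
        - (A / (1 - δ)) * t ^ (1 - δ)
        - (lam * B / (α + 1)) * t ^ (α + 1)) t = t ^ α * (σ₀ t - lam * B) := by
    intro t ht
    rw [(hDφ t ht).deriv, hψσ t ht]
  set φ₀ : ℝ → ℝ := fun t : ℝ => (X / p) * t ^ p + (Y / q) * t ^ q
      - (A / (1 - δ)) * t ^ (1 - δ)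
      - (lam * B / (α + 1)) * t ^ (α + 1) with hφ₀
  -- second derivative at solutions
  have hsecond : ∀ t : ℝ, 0 < t → σ₀ t = lam * B →
      deriv (deriv φ₀) t = t ^ α * σd t := by
    intro t ht hv
    have hEv : deriv φ₀ =ᶠ[𝓝 t] fun s : ℝ => s ^ α * (σ₀ s - lam * B) :=
      Filter.eventually_of_mem (Ioi_mem_nhds ht) fun s hs => hderivφ s hs
    rw [hEv.deriv_eq]
    have hprod : HasDerivAt (fun s : ℝ => s ^ α * (σ₀ s - lam * B))
        (α * t ^ (α - 1) * (σ₀ t - lam * B) + t ^ α * σd t) t :=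
      (Real.hasDerivAt_rpow_const (x := t) (p := α)
        (Or.inl ht.ne')).mul ((hDσ t ht).sub_const (lam * B))
    rw [hprod.deriv, hv]
    ring
  refine ⟨t₁, t₂, ht₁0, ht₁m, ht₂m, ht₁v, ht₂v, huniq, ?_, ?_, ?_, ?_, ?_, ?_, ?_⟩
  · rw [hderivσ t₁ ht₁0]; exact hσd_pos t₁ ht₁0 ht₁m
  · rw [hderivσ t₂ ht₂0]; exact hσd_neg t₂ ht₂m
  · rw [hderivφ t₁ ht₁0, ht₁v]; ring
  · rw [hderivφ t₂ ht₂0, ht₂v]; ring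
  · rw [hsecond t₁ ht₁0 ht₁v]
    exact mul_pos (Real.rpow_pos_of_pos ht₁0 α) (hσd_pos t₁ ht₁0 ht₁m)
  · rw [hsecond t₂ ht₂0 ht₂v]
    exact mul_neg_of_pos_of_neg (Real.rpow_pos_of_pos ht₂0 α) (hσd_neg t₂ ht₂m)
  · intro t ht hv
    rw [hderivφ t ht] at hv
    have htα : t ^ α ≠ 0 := (Real.rpow_pos_of_pos ht α).ne'
    have : σ₀ t - lam * B = 0 := by
      rcases mul_eq_zero.1 hv with h | h
      · exact absurd h htα
      · exact h
    exact huniq t ht (by linarith)
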